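/- arXiv:1703.06405 — 5 statements merged into one kernel-verified Lean document; each statement's English description precedes it below -/
import Mathlib

section
/- Let 0 < q < 1. On ℓ²(ℤ≥0) with S the unilateral shift, C₄ e_k = √(1−q^{4k}) e_k, and D e_k = q^k e_k, the operators z₁₁ = −q^{-1} e^{2iφ} S* C₄, z₂₁ = e^{iφ} D², z₂₂ = C₄ S (for any φ ∈ [0,2π)) satisfy the commutation relations z₁₁ z₂₁ = q² z₂₁ z₁₁, z₂₁ z₂₂ = q² z₂₂ z₂₁, and z₁₁ z₂₂ − z₂₂ z₁₁ = q(q² − q^{-2}) z₂₁². -/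
noncomputable section
open ContinuousLinearMap Complex

/-- ℓ²(ℤ≥0) -/
abbrev H : Type := lp (fun _ : ℕ => ℂ) 2

/-- standard orthonormal basis vector e_k -/
def e (k : ℕ) : H := lp.single 2 k 1

local notation "⟪" x ", " y "⟫" => @inner ℂ H _ x y

lemma e_coe_default (k : ℕ) : (default : HilbertBasis ℕ ℂ H) k = e k := by
  classical
  rw [← HilbertBasis.repr_symm_single]
  rfl

lemma clm_ext {T T' : H →L[ℂ] H} (h : ∀ k, T (e k) = T' (e k)) : T = T' := by
  refine ContinuousLinearMap.ext_on
    (Submodule.dense_iff_topologicalClosure_eq_top.mpr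
      ((HilbertBasis.dense_span (default : HilbertBasis ℕ ℂ H)))) ?_
  rintro _ ⟨k, rfl⟩
  have := e_coe_default k
  rw [this]
  exact h k

lemma vec_ext {x y : H} (h : ∀ j, ⟪e j, x⟫ = ⟪e j, y⟫) : x = y := by
  classical
  apply lp.ext
  funext j
  have := h j
  simpa [e, lp.inner_single_left] using this

lemma inner_e (j k : ℕ) : ⟪e j, e k⟫ = if k = j then 1 else 0 := by
  classical
  simp [e, lp.inner_single_left, lp.single_apply, eq_comm, Pi.single_apply]

lemma adjS (S : H →L[ℂ] H) (hS : ∀ k, S (e k) = e (k + 1)) (k : ℕ) :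
    adjoint S (e (k + 1)) = e k := by
  classical
  apply vec_ext
  intro j
  rw [ContinuousLinearMap.adjoint_inner_right, hS j, inner_e, inner_e]
  simp

theorem stmt3 (q : ℝ) (hq : 0 < q) (hq1 : q < 1) (φ : ℝ) (hφ : φ ∈ Set.Ico 0 (2 * Real.pi))
    (S C4 D : H →L[ℂ] H)
    (hS : ∀ k, S (e k) = e (k + 1))
    (hC4 : ∀ k, C4 (e k) = ((Real.sqrt (1 - q ^ (4 * k)) : ℝ) : ℂ) • e k)
    (hD : ∀ k, D (e k) = ((q ^ k : ℝ) : ℂ) • e k)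
    (z11 z21 z22 : H →L[ℂ] H)
    (hz11 : z11 = (-(q⁻¹ : ℂ) * Complex.exp (2 * φ * Complex.I)) • (adjoint S * C4))
    (hz21 : z21 = Complex.exp (φ * Complex.I) • (D * D))
    (hz22 : z22 = C4 * S) :
    z11 * z21 = ((q : ℂ) ^ 2) • (z21 * z11)
    ∧ z21 * z22 = ((q : ℂ) ^ 2) • (z22 * z21)
    ∧ z11 * z22 - z22 * z11 = ((q : ℂ) * ((q : ℂ) ^ 2 - (q : ℂ)⁻¹ ^ 2)) • z21 ^ 2 := by
  have hq0 : (q : ℂ) ≠ 0 := Complex.ofReal_ne_zero.mpr hq.ne'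
  set E : ℂ := Complex.exp (φ * Complex.I) with hE
  have hE2 : Complex.exp (2 * φ * Complex.I) = E * E := by
    rw [hE, ← Complex.exp_add]; ring_nf
  set c : ℂ := -(q⁻¹ : ℂ) * (E * E) with hc
  have hz11' : z11 = c • (adjoint S * C4) := by rw [hz11, hE2]
  -- squares of the sqrt coefficients
  have hs : ∀ n : ℕ, ((Real.sqrt (1 - q ^ (4 * n)) : ℝ) : ℂ) *
      ((Real.sqrt (1 - q ^ (4 * n)) : ℝ) : ℂ) = ((1 : ℂ) - (q : ℂ) ^ (4 * n)) := by
    intro n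
    rw [← Complex.ofReal_mul,
      Real.mul_self_sqrt (sub_nonneg.mpr (pow_le_one₀ hq.le hq1.le))]
    push_cast; ring
  -- actions on basis vectors
  have h21 : ∀ k, z21 (e k) = (E * (q : ℂ) ^ k * (q : ℂ) ^ k) • e k := by
    intro k
    rw [hz21]
    simp only [ContinuousLinearMap.smul_apply, ContinuousLinearMap.mul_apply, hD, map_smul,
      smul_smul]
    congr 1
    push_cast; ring
  have h22 : ∀ k, z22 (e k) = ((Real.sqrt (1 - q ^ (4 * (k + 1))) : ℝ) : ℂ) • e (k + 1) := by
    intro k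
    rw [hz22]
    simp only [ContinuousLinearMap.mul_apply, hS, hC4]
  have h11 : ∀ k, z11 (e (k + 1)) =
      (c * ((Real.sqrt (1 - q ^ (4 * (k + 1))) : ℝ) : ℂ)) • e k := by
    intro k
    rw [hz11']
    simp only [ContinuousLinearMap.smul_apply, ContinuousLinearMap.mul_apply, hC4, map_smul,
      adjS S hS, smul_smul]
  have h110 : z11 (e 0) = 0 := by
    rw [hz11']
    simp [ContinuousLinearMap.mul_apply, hC4 0]
  refine ⟨?_, ?_, ?_⟩
  · apply clm_ext
    intro k
    cases k with
    | zero =>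
      simp only [ContinuousLinearMap.mul_apply, ContinuousLinearMap.smul_apply, h21, map_smul,
        h110, smul_zero, map_zero]
    | succ k =>
      simp only [ContinuousLinearMap.mul_apply, ContinuousLinearMap.smul_apply, h21, map_smul,
        h11, smul_smul]
      congr 1
      ring
  · apply clm_ext
    intro k
    simp only [ContinuousLinearMap.mul_apply, ContinuousLinearMap.smul_apply, h21, h22, map_smul,
      smul_smul]
    congr 1
    ring
  · apply clm_ext
    intro k
    cases k with
    | zero =>
      simp only [ContinuousLinearMap.sub_apply, ContinuousLinearMap.mul_apply,
        ContinuousLinearMap.smul_apply, pow_two, h22, h110, map_smul, map_zero, h11, h21,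
        smul_smul, smul_zero, sub_zero]
      congr 1
      rw [mul_comm c, ← mul_assoc, hs (0 + 1)]
      simp only [hc]
      field_simp
      ring
    | succ k =>
      simp only [ContinuousLinearMap.sub_apply, ContinuousLinearMap.mul_apply,
        ContinuousLinearMap.smul_apply, pow_two, h22, h11, h21, map_smul, smul_smul]
      rw [← sub_smul]
      congr 1
      simp only [hc]
      have h1 := hs (k + 1)
      have h2 := hs (k + 1 + 1)
      have hu : (q : ℂ) * (q : ℂ)⁻¹ = 1 := mul_inv_cancel₀ hq0
      linear_combination (-(q : ℂ)⁻¹ * (E * E)) * h2 + ((q : ℂ)⁻¹ * (E * E)) * h1 +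
        (E * E * (q : ℂ) ^ (4 * k + 4) * ((q : ℂ) ^ 3 + (q : ℂ)⁻¹)) * hu
end
end

section
/- Let 0 < q < 1 and φ ∈ ℝ. The assignment Π_φ(z₁₁) = q^{-1} z, Π_φ(z₂₁) = 0, Π_φ(z₂₂) = e^{iφ}·1 respects all nine defining relations of Pol(Mat₂^sym)_q in the *-algebra Pol(ℂ)_q defined by z*z = q⁴ zz* + 1−q⁴; hence Π_φ extends to a *-homomorphism Pol(Mat₂^sym)_q → Pol(ℂ)_q. -/
noncomputable section
open Complex

/-- The assignment Π_φ(z₁₁) = q⁻¹ z, Π_φ(z₂₁) = 0, Π_φ(z₂₂) = e^{iφ}·1 respects the nine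
defining relations of Pol(Mat₂^sym)_q in any unital *-algebra Pol(ℂ)_q-type situation,
i.e. whenever z satisfies z*z = q⁴ zz* + (1-q⁴)·1; hence Π_φ extends to a *-homomorphism. -/
theorem stmt7 (q : ℝ) (hq : 0 < q) (hq1 : q < 1) (φ : ℝ)
    (A : Type*) [Ring A] [Algebra ℂ A] [StarRing A] [StarModule ℂ A]
    (z : A)
    (hz : star z * z = ((q : ℂ) ^ 4) • (z * star z) + ((1 : ℂ) - (q : ℂ) ^ 4) • (1 : A))
    (w11 w21 w22 : A)
    (hw11 : w11 = (q⁻¹ : ℂ) • z)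
    (hw21 : w21 = 0)
    (hw22 : w22 = Complex.exp (φ * Complex.I) • (1 : A)) :
    w11 * w21 = ((q : ℂ) ^ 2) • (w21 * w11)
    ∧ w21 * w22 = ((q : ℂ) ^ 2) • (w22 * w21)
    ∧ w11 * w22 - w22 * w11 = ((q : ℂ) * ((q : ℂ) ^ 2 - (q : ℂ)⁻¹ ^ 2)) • (w21 * w21)
    ∧ star w11 * w11
        = ((q : ℂ) ^ 4) • (w11 * star w11)
          - ((q : ℂ) * ((q : ℂ)⁻¹ - (q : ℂ)) * (1 + (q : ℂ) ^ 2) ^ 2) • (w21 * star w21)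
          + (((q : ℂ)⁻¹ - (q : ℂ)) ^ 2 * (1 + (q : ℂ) ^ 2)) • (w22 * star w22)
          + ((1 : ℂ) - (q : ℂ) ^ 4) • (1 : A)
    ∧ star w11 * w21
        = ((q : ℂ) ^ 2) • (w21 * star w11)
          - ((q : ℂ) * ((q : ℂ)⁻¹ - (q : ℂ)) * ((q : ℂ)⁻¹ + (q : ℂ))) • (w22 * star w21)
    ∧ star w11 * w22 = w22 * star w11
    ∧ star w21 * w21
        = ((q : ℂ) ^ 2) • (w21 * star w21)
          - ((1 : ℂ) - (q : ℂ) ^ 2) • (w22 * star w22)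
          + ((1 : ℂ) - (q : ℂ) ^ 2) • (1 : A)
    ∧ star w21 * w22 = ((q : ℂ) ^ 2) • (w22 * star w21)
    ∧ star w22 * w22
        = ((q : ℂ) ^ 4) • (w22 * star w22) + ((1 : ℂ) - (q : ℂ) ^ 4) • (1 : A) := by

  subst hw11 hw21 hw22
  have hq0 : (q:ℂ) ≠ 0 := by exact_mod_cast hq.ne'
  have he : Complex.exp (φ * Complex.I) * (starRingEnd ℂ) (Complex.exp (φ * Complex.I)) = 1 := by
    rw [← Complex.exp_conj, map_mul, Complex.conj_ofReal, Complex.conj_I, mul_neg,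
      ← Complex.exp_add, add_neg_cancel, Complex.exp_zero]
  have he' : (starRingEnd ℂ) (Complex.exp (φ * Complex.I)) * Complex.exp (φ * Complex.I) = 1 := by
    rw [mul_comm]; exact he
  refine ⟨by simp, by simp, by simp [smul_mul_assoc, mul_smul_comm, smul_smul, mul_comm], ?_, by simp, ?_, ?_, by simp, ?_⟩
  · simp only [star_smul, Complex.star_def, map_inv₀, Complex.conj_ofReal, smul_mul_assoc,
      mul_smul_comm, smul_smul, star_zero, mul_zero, zero_mul, smul_zero, sub_zero, star_one,
      mul_one, one_mul, hz, he, he']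
    rw [smul_add, smul_smul, smul_smul]
    match_scalars <;> field_simp <;> ring
  · simp only [star_smul, Complex.star_def, map_inv₀, Complex.conj_ofReal, smul_mul_assoc,
      mul_smul_comm, smul_smul, star_one, mul_one, one_mul]
    rw [mul_comm]
  · simp only [star_zero, zero_mul, mul_zero, smul_zero, zero_sub, star_smul, Complex.star_def,
      smul_mul_assoc, mul_smul_comm, smul_smul, star_one, mul_one, one_mul, he, he']
    module
  · simp only [star_smul, Complex.star_def, smul_mul_assoc, mul_smul_comm, smul_smul, star_one,
      mul_one, one_mul, he, he']
    module
end
end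

section
/- Let 0 < q < 1 and let X ⊆ 𝕋 be a subset of the unit circle. If for every θ ∈ ℝ one has sup { |ζ + e^{iθ}| : ζ ∈ ⋃_{k≥0} q^{2k} X } = 2, then X is dense in 𝕋. -/
noncomputable section
open Complex

theorem stmt9 (q : ℝ) (hq : 0 < q) (hq1 : q < 1)
    (X : Set ℂ) (hX : X ⊆ {w : ℂ | ‖w‖ = 1})
    (hsup : ∀ θ : ℝ,
      sSup {r : ℝ | ∃ x ∈ X, ∃ k : ℕ,
        r = ‖(q : ℂ) ^ (2 * k) * x + Complex.exp (θ * Complex.I)‖} = 2) :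
    {w : ℂ | ‖w‖ = 1} ⊆ closure X := by
  -- X is nonempty
  have hXne : X.Nonempty := by
    rcases X.eq_empty_or_nonempty with h | h
    · exfalso
      have := hsup 0
      rw [h] at this
      simp only [Set.mem_empty_iff_false, false_and, exists_false, exists_const] at this
      rw [show {r : ℝ | False} = (∅ : Set ℝ) by ext r; simp, Real.sSup_empty] at this
      norm_num at this
    · exact h
  intro w hw
  simp only [Set.mem_setOf_eq] at hw
  rw [Metric.mem_closure_iff]
  intro ε hε
  set θ := w.arg with hθ
  have hwexp : Complex.exp (θ * Complex.I) = w := by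
    have := Complex.norm_mul_exp_arg_mul_I w
    rwa [hw, Complex.ofReal_one, one_mul] at this
  set δ : ℝ := min ε 2 with hδ
  have hδpos : 0 < δ := lt_min hε (by norm_num)
  have hδle : δ ≤ 2 := min_le_right _ _
  have h4 : (0:ℝ) ≤ 4 - δ ^ 2 := by nlinarith
  set t : ℝ := max (q ^ 2 + 1) (Real.sqrt (4 - δ ^ 2)) with ht
  have ht2 : t < 2 := by
    apply max_lt
    · nlinarith
    · have : Real.sqrt (4 - δ ^ 2) < Real.sqrt 4 := by
        apply Real.sqrt_lt_sqrt h4; nlinarith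
      have h42 : Real.sqrt 4 = 2 := by
        rw [show (4:ℝ) = 2 ^ 2 by norm_num, Real.sqrt_sq (by norm_num)]
      linarith [this, h42.le.trans_eq rfl]
  -- the set is nonempty
  obtain ⟨x₀, hx₀⟩ := hXne
  have hSne : {r : ℝ | ∃ x ∈ X, ∃ k : ℕ,
      r = ‖(q : ℂ) ^ (2 * k) * x + Complex.exp (θ * Complex.I)‖}.Nonempty :=
    ⟨_, x₀, hx₀, 0, rfl⟩
  have := hsup θ
  have hlt : t < sSup {r : ℝ | ∃ x ∈ X, ∃ k : ℕ,
      r = ‖(q : ℂ) ^ (2 * k) * x + Complex.exp (θ * Complex.I)‖} := by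
    rw [this]; exact ht2
  obtain ⟨r, ⟨x, hxX, k, hr⟩, htr⟩ := exists_lt_of_lt_csSup hSne hlt
  have hxabs : ‖x‖ = 1 := hX hxX
  -- k must be 0
  have hk0 : k = 0 := by
    by_contra hk
    have hk1 : 1 ≤ k := Nat.one_le_iff_ne_zero.mpr hk
    have hb : r ≤ q ^ (2 * k) + 1 := by
      rw [hr]
      calc ‖(q : ℂ) ^ (2 * k) * x + Complex.exp (θ * Complex.I)‖
          ≤ ‖(q : ℂ) ^ (2 * k) * x‖ + ‖Complex.exp (θ * Complex.I)‖ :=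
            norm_add_le _ _
        _ = q ^ (2 * k) + 1 := by
            rw [norm_mul, norm_pow, Complex.norm_real, Real.norm_eq_abs, abs_of_pos hq, hxabs, mul_one,
              Complex.norm_exp_ofReal_mul_I]
    have hq2 : q ^ (2 * k) ≤ q ^ 2 :=
      pow_le_pow_of_le_one hq.le hq1.le (by omega)
    have : r ≤ q ^ 2 + 1 := by linarith
    have : t < q ^ 2 + 1 := lt_of_lt_of_le htr this
    exact absurd (le_max_left (q ^ 2 + 1) (Real.sqrt (4 - δ ^ 2))) (not_le.mpr this)
  subst hk0
  rw [mul_zero, pow_zero, one_mul, hwexp] at hr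
  -- r = ‖x + w‖ > sqrt(4 - δ²)
  have hrs : Real.sqrt (4 - δ ^ 2) < r :=
    lt_of_le_of_lt (le_max_right _ _) htr
  have hr0 : (0:ℝ) ≤ Real.sqrt (4 - δ ^ 2) := Real.sqrt_nonneg _
  have hrsq : 4 - δ ^ 2 < r ^ 2 := by
    have := pow_lt_pow_left₀ hrs hr0 two_ne_zero
    rwa [Real.sq_sqrt h4] at this
  -- parallelogram law
  have hpar : ‖x + w‖ * ‖x + w‖ + ‖x - w‖ * ‖x - w‖ = 2 * (‖x‖ * ‖x‖ + ‖w‖ * ‖w‖) :=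
    by have := parallelogram_law_with_norm ℝ x w; simpa only [sq] using this
  have hnx : ‖x‖ = 1 := hxabs
  have hnw : ‖w‖ = 1 := hw
  have hrnorm : r = ‖x + w‖ := hr
  have hxwsq : ‖x - w‖ ^ 2 < δ ^ 2 := by
    have : ‖x + w‖ * ‖x + w‖ + ‖x - w‖ * ‖x - w‖ = 4 := by
      rw [hpar, hnx, hnw]; ring
    nlinarith [sq_nonneg (‖x - w‖)]
  have hxw : ‖x - w‖ < δ :=
    lt_of_pow_lt_pow_left₀ 2 hδpos.le hxwsq
  refine ⟨x, hxX, ?_⟩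
  rw [dist_comm, dist_eq_norm]
  exact lt_of_lt_of_le hxw (min_le_left _ _)
end
end

section
/- Let 0 < q < 1. On ℓ²(ℤ≥0), with S the shift, C₂ e_k = √(1−q^{2k}) e_k, and D e_k = q^k e_k, the operators t₁₁ = S*C₂, t₁₂ = −q e^{−iφ} D, t₂₁ = e^{iφ} D, t₂₂ = C₂S satisfy the ℂ[SL₂]_q relations: t₁₁t₂₁ = q t₂₁t₁₁, t₁₁t₁₂ = q t₁₂t₁₁, t₁₂t₂₁ = t₂₁t₁₂, t₂₂t₂₁ = q^{-1} t₂₁t₂₂, t₂₂t₁₂ = q^{-1} t₁₂t₂₂, t₁₁t₂₂ − t₂₂t₁₁ = (q − q^{-1}) t₁₂t₂₁, and t₁₁t₂₂ − q t₁₂t₂₁ = I. -/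
noncomputable section
open ContinuousLinearMap Complex

lemma e_apply (m k : ℕ) : (e m : ∀ _ : ℕ, ℂ) k = if k = m then 1 else 0 := by
  simp [e, lp.single_apply, Pi.single_apply]

lemma inner_e_s10 (k : ℕ) (f : H) : @inner ℂ _ _ (e k) f = f k := by
  simp [e, lp.inner_single_left]

lemma ext_e (T T' : H →L[ℂ] H) (h : ∀ k, T (e k) = T' (e k)) : T = T' := by
  ext f
  have hf := lp.hasSum_single (E := fun _ : ℕ => ℂ) ENNReal.ofNat_ne_top f
  have key : ∀ i, lp.single (E := fun _ : ℕ => ℂ) 2 i (f i) = f i • e i := by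
    intro i
    have := lp.single_smul (E := fun _ : ℕ => ℂ) 2 i (f i) (1 : ℂ)
    rw [e, ← this, smul_eq_mul, mul_one]
  have h1 : HasSum (fun i => f i • T (e i)) (T f) := by
    simpa [key] using hf.mapL T
  have h2 : HasSum (fun i => f i • T (e i)) (T' f) := by
    have := hf.mapL T'
    simp only [key, map_smul] at this ⊢
    simpa [h] using this
  exact congrFun (congrArg _ (h1.unique h2)) _

lemma Sadj_zero (S : H →L[ℂ] H) (hS : ∀ k, S (e k) = e (k + 1)) :
    adjoint S (e 0) = 0 := by
  apply lp.ext; funext k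
  have : (adjoint S (e 0) : ∀ _ : ℕ, ℂ) k = @inner ℂ _ _ (e k) (adjoint S (e 0)) :=
    (inner_e_s10 k _).symm
  rw [this, adjoint_inner_right, hS, inner_e_s10, e_apply]
  simp

lemma Sadj_succ (S : H →L[ℂ] H) (hS : ∀ k, S (e k) = e (k + 1)) (m : ℕ) :
    adjoint S (e (m + 1)) = e m := by
  apply lp.ext; funext k
  have : (adjoint S (e (m + 1)) : ∀ _ : ℕ, ℂ) k = @inner ℂ _ _ (e k) (adjoint S (e (m + 1))) :=
    (inner_e_s10 k _).symm
  rw [this, adjoint_inner_right, hS, inner_e_s10, e_apply, e_apply]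
  simp

theorem stmt10 (q : ℝ) (hq : 0 < q) (hq1 : q < 1) (φ : ℝ)
    (S C2 D : H →L[ℂ] H)
    (hS : ∀ k, S (e k) = e (k + 1))
    (hC2 : ∀ k, C2 (e k) = ((Real.sqrt (1 - q ^ (2 * k)) : ℝ) : ℂ) • e k)
    (hD : ∀ k, D (e k) = ((q ^ k : ℝ) : ℂ) • e k)
    (t11 t12 t21 t22 : H →L[ℂ] H)
    (h11 : t11 = adjoint S * C2)
    (h12 : t12 = (-(q : ℂ) * Complex.exp (-(φ * Complex.I))) • D)
    (h21 : t21 = Complex.exp (φ * Complex.I) • D)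
    (h22 : t22 = C2 * S) :
    t11 * t21 = (q : ℂ) • (t21 * t11)
    ∧ t11 * t12 = (q : ℂ) • (t12 * t11)
    ∧ t12 * t21 = t21 * t12
    ∧ t22 * t21 = ((q : ℂ)⁻¹) • (t21 * t22)
    ∧ t22 * t12 = ((q : ℂ)⁻¹) • (t12 * t22)
    ∧ t11 * t22 - t22 * t11 = ((q : ℂ) - (q : ℂ)⁻¹) • (t12 * t21)
    ∧ t11 * t22 - (q : ℂ) • (t12 * t21) = (1 : H →L[ℂ] H) := by
  have hqc : (q : ℂ) ≠ 0 := by exact_mod_cast hq.ne'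
  have hexp : Complex.exp (-(φ * Complex.I)) * Complex.exp (φ * Complex.I) = 1 := by
    rw [← Complex.exp_add]; simp
  have hle : ∀ n : ℕ, (0:ℝ) ≤ 1 - q ^ n := fun n =>
    sub_nonneg.2 (pow_le_one₀ hq.le hq1.le)
  have hsq : ∀ n : ℕ, ((Real.sqrt (1 - q ^ n) : ℝ) : ℂ)
      * ((Real.sqrt (1 - q ^ n) : ℝ) : ℂ) = 1 - (q:ℂ) ^ n := by
    intro n
    rw [← Complex.ofReal_mul, Real.mul_self_sqrt (hle n)]
    push_cast; ring
  have ht11_0 : t11 (e 0) = 0 := by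
    simp [h11, ContinuousLinearMap.mul_apply, hC2, map_smul, Sadj_zero S hS]
  have ht11 : ∀ k, t11 (e (k + 1))
      = ((Real.sqrt (1 - q ^ (2 * (k + 1))) : ℝ) : ℂ) • e k := by
    intro k
    simp [h11, ContinuousLinearMap.mul_apply, hC2, map_smul, Sadj_succ S hS, -Complex.coe_smul]
  have ht12 : ∀ k, t12 (e k)
      = ((-(q : ℂ) * Complex.exp (-(φ * Complex.I))) * (q:ℂ) ^ k) • e k := by
    intro k
    simp [h12, hD, smul_smul]
  have ht21 : ∀ k, t21 (e k) = (Complex.exp (φ * Complex.I) * (q:ℂ) ^ k) • e k := by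
    intro k
    simp [h21, hD, smul_smul]
  have ht22 : ∀ k, t22 (e k)
      = ((Real.sqrt (1 - q ^ (2 * (k + 1))) : ℝ) : ℂ) • e (k + 1) := by
    intro k
    simp [h22, ContinuousLinearMap.mul_apply, hS, hC2]
  refine ⟨?_, ?_, ?_, ?_, ?_, ?_, ?_⟩
  · apply ext_e; intro k
    cases k with
    | zero => simp [ContinuousLinearMap.mul_apply, ht11_0, ht21, map_smul, -Complex.coe_smul]
    | succ k =>
      simp only [ContinuousLinearMap.mul_apply, ContinuousLinearMap.smul_apply,
        ht11, ht21, map_smul, smul_smul]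
      congr 1; push_cast; ring
  · apply ext_e; intro k
    cases k with
    | zero => simp [ContinuousLinearMap.mul_apply, ht11_0, ht12, map_smul, -Complex.coe_smul]
    | succ k =>
      simp only [ContinuousLinearMap.mul_apply, ContinuousLinearMap.smul_apply,
        ht11, ht12, map_smul, smul_smul]
      congr 1; push_cast; ring
  · apply ext_e; intro k
    simp only [ContinuousLinearMap.mul_apply, ht12, ht21, map_smul, smul_smul]
    congr 1; ring
  · apply ext_e; intro k
    simp only [ContinuousLinearMap.mul_apply, ContinuousLinearMap.smul_apply,
      ht22, ht21, map_smul, smul_smul]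
    congr 1; field_simp; ring
  · apply ext_e; intro k
    simp only [ContinuousLinearMap.mul_apply, ContinuousLinearMap.smul_apply,
      ht22, ht12, map_smul, smul_smul]
    congr 1; field_simp; ring
  · apply ext_e; intro k
    cases k with
    | zero =>
      simp only [ContinuousLinearMap.sub_apply, ContinuousLinearMap.mul_apply,
        ContinuousLinearMap.smul_apply, ht11_0, ht11, ht12, ht21, ht22,
        map_smul, map_zero, smul_smul, smul_zero, sub_zero]
      congr 1
      rw [hsq _]
      simp only [Complex.exp_neg]
      field_simp
      ring
    | succ k =>
      simp only [ContinuousLinearMap.sub_apply, ContinuousLinearMap.mul_apply,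
        ContinuousLinearMap.smul_apply, ht11, ht12, ht21, ht22, map_smul, smul_smul]
      rw [← sub_smul]
      congr 1
      rw [hsq _, hsq _]
      simp only [Complex.exp_neg]
      field_simp
      ring
  · apply ext_e; intro k
    simp only [ContinuousLinearMap.sub_apply, ContinuousLinearMap.mul_apply,
      ContinuousLinearMap.smul_apply, ht11, ht12, ht21, ht22, map_smul, smul_smul,
      ContinuousLinearMap.one_apply]
    rw [← sub_smul]
    conv_rhs => rw [← one_smul ℂ (e k)]
    congr 1
    rw [hsq _]
    simp only [Complex.exp_neg]
    field_simp
    ring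
end
end

section
/- Let 0 < q < 1. In ℂ[Mat₂^sym]_q with q-determinant det_q^sym z = z₂₂z₁₁ − q^{-1}z₂₁², the element det_q^sym z commutes with z₂₁ and satisfies z₁₁ (det_q^sym z) = (det_q^sym z) z₁₁ and z₂₂ (det_q^sym z) = (det_q^sym z) z₂₂; i.e., det_q^sym z is central in ℂ[Mat₂^sym]_q. -/
noncomputable section

/-- In ℂ[Mat₂^sym]_q the q-determinant det_q^sym z = z₂₂z₁₁ − q⁻¹z₂₁² is central: this holds
in any ℂ-algebra whose elements z₁₁, z₂₁, z₂₂ satisfy the three defining relations. -/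
theorem stmt18 (q : ℝ) (hq : 0 < q) (hq1 : q < 1)
    (A : Type*) [Ring A] [Algebra ℂ A]
    (z11 z21 z22 : A)
    (h1 : z11 * z21 = ((q : ℂ) ^ 2) • (z21 * z11))
    (h2 : z21 * z22 = ((q : ℂ) ^ 2) • (z22 * z21))
    (h3 : z11 * z22 - z22 * z11 = ((q : ℂ) * ((q : ℂ) ^ 2 - (q : ℂ)⁻¹ ^ 2)) • (z21 * z21))
    (d : A) (hd : d = z22 * z11 - (q⁻¹ : ℂ) • (z21 * z21)) :
    d * z21 = z21 * d ∧ z11 * d = d * z11 ∧ z22 * d = d * z22 := by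
  set c : ℂ := (q : ℂ) with hc
  have hc0 : c ≠ 0 := by
    simp only [hc, Ne, Complex.ofReal_eq_zero]
    exact hq.ne'
  have hc2 : c ^ 2 ≠ 0 := pow_ne_zero 2 hc0
  -- inverse form of h2
  have hb : z22 * z21 = (c ^ 2)⁻¹ • (z21 * z22) := by
    rw [h2, smul_smul, inv_mul_cancel₀ hc2, one_smul]
  -- additive form of h3
  have e1 : z11 * z22 = z22 * z11 + (c * (c ^ 2 - c⁻¹ ^ 2)) • (z21 * z21) := by
    rw [← h3]; abel
  subst hd
  refine ⟨?_, ?_, ?_⟩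
  · -- d * z21 = z21 * d
    have k1 : z22 * z11 * z21 = z21 * (z22 * z11) := by
      calc z22 * z11 * z21 = z22 * (z11 * z21) := mul_assoc _ _ _
        _ = (c ^ 2) • (z22 * z21 * z11) := by rw [h1, mul_smul_comm, mul_assoc]
        _ = (c ^ 2) • (((c ^ 2)⁻¹ • (z21 * z22)) * z11) := by rw [hb]
        _ = z21 * (z22 * z11) := by
            rw [smul_mul_assoc, smul_smul, mul_inv_cancel₀ hc2, one_smul, mul_assoc]
    rw [sub_mul, mul_sub, k1, smul_mul_assoc, mul_smul_comm, mul_assoc]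
  · -- z11 * d = d * z11
    have k2 : z11 * (z21 * z21) = (c ^ 2 * c ^ 2) • (z21 * z21 * z11) := by
      calc z11 * (z21 * z21) = (z11 * z21) * z21 := (mul_assoc _ _ _).symm
        _ = (c ^ 2) • (z21 * (z11 * z21)) := by
            conv_lhs => rw [h1]
            rw [smul_mul_assoc, mul_assoc]
        _ = (c ^ 2) • (z21 * ((c ^ 2) • (z21 * z11))) := by rw [h1]
        _ = (c ^ 2 * c ^ 2) • (z21 * z21 * z11) := by
            rw [mul_smul_comm, smul_smul, mul_assoc]
    have k3 : z11 * (z22 * z11) = z22 * z11 * z11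
        + (c * (c ^ 2 - c⁻¹ ^ 2)) • (z21 * z21 * z11) := by
      calc z11 * (z22 * z11) = (z11 * z22) * z11 := (mul_assoc _ _ _).symm
        _ = (z22 * z11 + (c * (c ^ 2 - c⁻¹ ^ 2)) • (z21 * z21)) * z11 := by rw [e1]
        _ = z22 * z11 * z11 + (c * (c ^ 2 - c⁻¹ ^ 2)) • (z21 * z21 * z11) := by
            rw [add_mul, smul_mul_assoc]
    have hs : c * (c ^ 2 - c⁻¹ ^ 2) - c⁻¹ * (c ^ 2 * c ^ 2) = -c⁻¹ := by
      field_simp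
      ring
    calc z11 * (z22 * z11 - c⁻¹ • (z21 * z21))
        = z11 * (z22 * z11) - c⁻¹ • (z11 * (z21 * z21)) := by
          rw [mul_sub, mul_smul_comm]
      _ = z22 * z11 * z11
          + (c * (c ^ 2 - c⁻¹ ^ 2) - c⁻¹ * (c ^ 2 * c ^ 2)) • (z21 * z21 * z11) := by
          rw [k2, k3, smul_smul, sub_smul]; abel
      _ = z22 * z11 * z11 - c⁻¹ • (z21 * z21 * z11) := by rw [hs, neg_smul]; abel
      _ = (z22 * z11 - c⁻¹ • (z21 * z21)) * z11 := by
          rw [sub_mul, smul_mul_assoc]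
  · -- z22 * d = d * z22
    have k4 : z22 * (z21 * z21) = ((c ^ 2)⁻¹ * (c ^ 2)⁻¹) • (z21 * z21 * z22) := by
      calc z22 * (z21 * z21) = (z22 * z21) * z21 := (mul_assoc _ _ _).symm
        _ = (c ^ 2)⁻¹ • (z21 * (z22 * z21)) := by
            conv_lhs => rw [hb]
            rw [smul_mul_assoc, mul_assoc]
        _ = (c ^ 2)⁻¹ • (z21 * ((c ^ 2)⁻¹ • (z21 * z22))) := by rw [hb]
        _ = ((c ^ 2)⁻¹ * (c ^ 2)⁻¹) • (z21 * z21 * z22) := by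
            rw [mul_smul_comm, smul_smul, mul_assoc]
    have k5 : (z22 * z11) * z22 = z22 * (z22 * z11)
        + (c * (c ^ 2 - c⁻¹ ^ 2) * ((c ^ 2)⁻¹ * (c ^ 2)⁻¹)) • (z21 * z21 * z22) := by
      calc (z22 * z11) * z22 = z22 * (z11 * z22) := mul_assoc _ _ _
        _ = z22 * (z22 * z11) + (c * (c ^ 2 - c⁻¹ ^ 2)) • (z22 * (z21 * z21)) := by
            rw [e1, mul_add, mul_smul_comm]
        _ = z22 * (z22 * z11)
            + (c * (c ^ 2 - c⁻¹ ^ 2) * ((c ^ 2)⁻¹ * (c ^ 2)⁻¹)) • (z21 * z21 * z22) := by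
            rw [k4, smul_smul]
    have hs2 : c⁻¹ * ((c ^ 2)⁻¹ * (c ^ 2)⁻¹)
        + c * (c ^ 2 - c⁻¹ ^ 2) * ((c ^ 2)⁻¹ * (c ^ 2)⁻¹) = c⁻¹ := by
      field_simp
      ring
    calc z22 * (z22 * z11 - c⁻¹ • (z21 * z21))
        = z22 * (z22 * z11) - c⁻¹ • (z22 * (z21 * z21)) := by
          rw [mul_sub, mul_smul_comm]
      _ = z22 * (z22 * z11) - (c⁻¹ * ((c ^ 2)⁻¹ * (c ^ 2)⁻¹)) • (z21 * z21 * z22) := by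
          rw [k4, smul_smul]
      _ = (z22 * z11) * z22
          - (c⁻¹ * ((c ^ 2)⁻¹ * (c ^ 2)⁻¹)
            + c * (c ^ 2 - c⁻¹ ^ 2) * ((c ^ 2)⁻¹ * (c ^ 2)⁻¹)) • (z21 * z21 * z22) := by
          rw [k5, add_smul]; abel
      _ = (z22 * z11) * z22 - c⁻¹ • (z21 * z21 * z22) := by rw [hs2]
      _ = (z22 * z11 - c⁻¹ • (z21 * z21)) * z22 := by
          rw [sub_mul, smul_mul_assoc]
end
end
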